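/- Let η : ℤ² → ℝ satisfy (H₀): inf_n η(n) > −1 and η(n) → 0 as |n| → ∞, and set m := 1 + η. Then any bounded operator D on ℓ²(ℤ²,ℂ) satisfying (D f)(n) = (Δ_T f)(n) − (Δ̃ f)(n) for all f ∈ ℓ²(ℤ²,ℂ) and all n ∈ ℤ² is a compact operator. -/

import Mathlib

open scoped ENNReal
open Filter Topology

noncomputable section

/-- The Hilbert space `ℓ²(ℤ², ℂ)`. -/
abbrev H2 : Type := lp (fun _ : ℤ × ℤ => ℂ) 2

/-- The triangular-lattice Laplacian, acting pointwise on functions `ℤ² → ℂ`. -/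
def lapT (f : ℤ × ℤ → ℂ) : ℤ × ℤ → ℂ := fun n =>
  (1/6 : ℂ) * (f (n.1 + 1, n.2) + f (n.1 - 1, n.2) + f (n.1, n.2 + 1)
    + f (n.1, n.2 - 1) + f (n.1 + 1, n.2 - 1) + f (n.1 - 1, n.2 + 1))

/-- The symbol `F(x₁,x₂) = (1/3)(cos x₁ + cos x₂ + cos (x₁ - x₂))`. -/
def symbF (x : ℝ × ℝ) : ℝ := (1/3) * (Real.cos x.1 + Real.cos x.2 + Real.cos (x.1 - x.2))

/-- `∂₁ F`. -/
def d1F (x : ℝ × ℝ) : ℝ := -(1/3) * (Real.sin x.1 + Real.sin (x.1 - x.2))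

/-- `∂₂ F`. -/
def d2F (x : ℝ × ℝ) : ℝ := -(1/3) * (Real.sin x.2 - Real.sin (x.1 - x.2))

/-- Japanese bracket `⟨t⟩ = √(1/2 + t²)`. -/
def jap (t : ℝ) : ℝ := Real.sqrt (1/2 + t^2)

/-- The weight `Λ(n₁,n₂) = ⟨n₁⟩ + ⟨n₂⟩`. -/
def Lam (n : ℤ × ℤ) : ℝ := jap (n.1 : ℝ) + jap (n.2 : ℝ)

/-- The conjugate operator `A`, acting pointwise on functions `ℤ² → ℂ`. -/
def opA (f : ℤ × ℤ → ℂ) : ℤ × ℤ → ℂ := fun n =>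
  (Complex.I / 6) *
    (((n.1 : ℂ) + 1/2) * f (n.1 + 1, n.2) - ((n.1 : ℂ) - 1/2) * f (n.1 - 1, n.2)
      + ((n.2 : ℂ) + 1/2) * f (n.1, n.2 + 1) - ((n.2 : ℂ) - 1/2) * f (n.1, n.2 - 1)
      + ((n.2 : ℂ) - (n.1 : ℂ) + 1) * f (n.1 - 1, n.2 + 1)
      + ((n.1 : ℂ) - (n.2 : ℂ) + 1) * f (n.1 + 1, n.2 - 1))

/-- The perturbed Laplacian `Δ̃` with weight `m`, acting pointwise on functions `ℤ² → ℂ`: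
`(Δ̃ f)(n) = (1/6) Σ_{l ∼ n} f(l) / (√(m n) √(m l))`. -/
def lapPert (m : ℤ × ℤ → ℝ) (f : ℤ × ℤ → ℂ) : ℤ × ℤ → ℂ := fun n =>
  (1/6 : ℂ) *
    (f (n.1 + 1, n.2) / ((Real.sqrt (m n) * Real.sqrt (m (n.1 + 1, n.2)) : ℝ) : ℂ)
      + f (n.1 - 1, n.2) / ((Real.sqrt (m n) * Real.sqrt (m (n.1 - 1, n.2)) : ℝ) : ℂ)
      + f (n.1, n.2 + 1) / ((Real.sqrt (m n) * Real.sqrt (m (n.1, n.2 + 1)) : ℝ) : ℂ)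
      + f (n.1, n.2 - 1) / ((Real.sqrt (m n) * Real.sqrt (m (n.1, n.2 - 1)) : ℝ) : ℂ)
      + f (n.1 + 1, n.2 - 1) / ((Real.sqrt (m n) * Real.sqrt (m (n.1 + 1, n.2 - 1)) : ℝ) : ℂ)
      + f (n.1 - 1, n.2 + 1) / ((Real.sqrt (m n) * Real.sqrt (m (n.1 - 1, n.2 + 1)) : ℝ) : ℂ))

namespace LapAux

lemma two_toReal : (2 : ℝ≥0∞).toReal = 2 := by norm_num

lemma summable_two (f : H2) : Summable (fun n => ‖f n‖ ^ (2:ℝ)) := by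
  have := (lp.memℓp f).summable (p := 2) (by norm_num)
  simpa [two_toReal] using this

lemma memℓp_two {g : ℤ × ℤ → ℂ} (h : Summable fun n => ‖g n‖ ^ (2:ℝ)) :
    Memℓp g (2:ℝ≥0∞) := by
  apply memℓp_gen
  simpa [two_toReal] using h

lemma sum_sq_le (f : H2) (s : Finset (ℤ × ℤ)) :
    ∑ i ∈ s, ‖f i‖ ^ (2:ℝ) ≤ ‖f‖ ^ (2:ℝ) := by
  simpa [two_toReal] using lp.sum_rpow_le_norm_rpow (p := 2) (by norm_num) f s

lemma lp_norm_le_of_pointwise {g f : H2} {C : ℝ} (hC : 0 ≤ C)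
    (h : ∀ n, ‖g n‖ ≤ C * ‖f n‖) : ‖g‖ ≤ C * ‖f‖ := by
  refine lp.norm_le_of_forall_sum_le (p := 2) (by norm_num)
    (mul_nonneg hC (norm_nonneg f)) fun s => ?_
  rw [two_toReal]
  calc ∑ i ∈ s, ‖g i‖ ^ (2:ℝ)
      ≤ ∑ i ∈ s, C ^ (2:ℝ) * ‖f i‖ ^ (2:ℝ) := by
        refine Finset.sum_le_sum fun i _ => ?_
        rw [← Real.mul_rpow hC (norm_nonneg _)]
        exact Real.rpow_le_rpow (norm_nonneg _) (h i) (by norm_num)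
    _ = C ^ (2:ℝ) * ∑ i ∈ s, ‖f i‖ ^ (2:ℝ) := by rw [Finset.mul_sum]
    _ ≤ C ^ (2:ℝ) * ‖f‖ ^ (2:ℝ) :=
        mul_le_mul_of_nonneg_left (sum_sq_le f s) (Real.rpow_nonneg hC _)
    _ = (C * ‖f‖) ^ (2:ℝ) := (Real.mul_rpow hC (norm_nonneg _)).symm

/-! ### Multiplication operators -/

lemma memℓp_mul {w : ℤ × ℤ → ℂ} {C : ℝ} (hw : ∀ n, ‖w n‖ ≤ C) (f : H2) :
    Memℓp (fun n => w n * f n) (2:ℝ≥0∞) := by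
  have hC : 0 ≤ C := le_trans (norm_nonneg _) (hw 0)
  refine memℓp_two (Summable.of_nonneg_of_le (fun n => Real.rpow_nonneg (norm_nonneg _) _)
    (fun n => ?_) ((summable_two f).mul_left (C ^ (2:ℝ))))
  rw [← Real.mul_rpow hC (norm_nonneg _)]
  refine Real.rpow_le_rpow (norm_nonneg _) ?_ (by norm_num)
  rw [norm_mul]
  exact mul_le_mul_of_nonneg_right (hw n) (norm_nonneg _)

def mulCLM (w : ℤ × ℤ → ℂ) (C : ℝ) (hw : ∀ n, ‖w n‖ ≤ C) : H2 →L[ℂ] H2 :=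
  LinearMap.mkContinuous
    { toFun := fun f => ⟨fun n => w n * f n, memℓp_mul hw f⟩
      map_add' := fun f g => by
        apply lp.ext; funext n
        change w n * (f + g) n = (fun k => w k * f k) n + (fun k => w k * g k) n
        rw [lp.coeFn_add]; simp; ring
      map_smul' := fun c f => by
        apply lp.ext; funext n
        change w n * (c • f) n = (c • (fun k => w k * f k)) n
        rw [lp.coeFn_smul]; simp; ring }
    C (fun f => by
      refine lp_norm_le_of_pointwise (le_trans (norm_nonneg _) (hw 0)) fun n => ?_
      show ‖w n * f n‖ ≤ C * ‖f n‖
      rw [norm_mul]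
      exact mul_le_mul_of_nonneg_right (hw n) (norm_nonneg _))

lemma mulCLM_apply (w : ℤ × ℤ → ℂ) (C : ℝ) (hw : ∀ n, ‖w n‖ ≤ C) (f : H2) (n : ℤ × ℤ) :
    mulCLM w C hw f n = w n * f n := rfl

/-! ### Shift operators and the triangular Laplacian -/

lemma memℓp_shift (v : ℤ × ℤ) (f : H2) : Memℓp (fun n => f (n + v)) (2:ℝ≥0∞) := by
  refine memℓp_two ?_
  exact ((Equiv.addRight v).summable_iff (f := fun m => ‖f m‖ ^ (2:ℝ))).2 (summable_two f)

lemma shift_norm_le (v : ℤ × ℤ) (f : H2) (g : H2) (hg : ∀ n, g n = f (n + v)) :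
    ‖g‖ ≤ 1 * ‖f‖ := by
  rw [one_mul]
  refine lp.norm_le_of_forall_sum_le (p := 2) (by norm_num) (norm_nonneg f) fun s => ?_
  rw [two_toReal]
  have : ∑ i ∈ s, ‖g i‖ ^ (2:ℝ) = ∑ i ∈ s.image (· + v), ‖f i‖ ^ (2:ℝ) := by
    rw [Finset.sum_image (by intro a _ b _ h; exact (add_left_injective v) h)]
    simp [hg]
  rw [this]
  exact sum_sq_le f _

def shiftCLM (v : ℤ × ℤ) : H2 →L[ℂ] H2 :=
  LinearMap.mkContinuous
    { toFun := fun f => ⟨fun n => f (n + v), memℓp_shift v f⟩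
      map_add' := fun f g => by
        apply lp.ext; funext n
        change (f + g) (n + v) = (fun k => f (k+v)) n + (fun k => g (k+v)) n
        rw [lp.coeFn_add]; simp
      map_smul' := fun c f => by
        apply lp.ext; funext n
        change (c • f) (n + v) = (c • (fun k => f (k+v))) n
        rw [lp.coeFn_smul]; simp }
    1 (fun f => shift_norm_le v f _ (fun n => rfl))

lemma shiftCLM_apply (v : ℤ × ℤ) (f : H2) (n : ℤ × ℤ) :
    shiftCLM v f n = f (n + v) := rfl

def lapTCLM : H2 →L[ℂ] H2 :=
  (6:ℂ)⁻¹ • (shiftCLM (1,0) + shiftCLM (-1,0) + shiftCLM (0,1) + shiftCLM (0,-1)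
    + shiftCLM (1,-1) + shiftCLM (-1,1))

lemma lapTCLM_apply (f : H2) (n : ℤ × ℤ) : lapTCLM f n = lapT (⇑f) n := by
  have e1 : n + ((1:ℤ),(0:ℤ)) = (n.1 + 1, n.2) := by ext <;> simp
  have e2 : n + ((-1:ℤ),(0:ℤ)) = (n.1 - 1, n.2) := by ext <;> simp <;> ring
  have e3 : n + ((0:ℤ),(1:ℤ)) = (n.1, n.2 + 1) := by ext <;> simp
  have e4 : n + ((0:ℤ),(-1:ℤ)) = (n.1, n.2 - 1) := by ext <;> simp <;> ring
  have e5 : n + ((1:ℤ),(-1:ℤ)) = (n.1 + 1, n.2 - 1) := by ext <;> simp <;> ring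
  have e6 : n + ((-1:ℤ),(1:ℤ)) = (n.1 - 1, n.2 + 1) := by ext <;> simp <;> ring
  have : lapTCLM f = (6:ℂ)⁻¹ • ((shiftCLM (1,0) + shiftCLM (-1,0) + shiftCLM (0,1)
      + shiftCLM (0,-1) + shiftCLM (1,-1) + shiftCLM (-1,1)) f) := rfl
  rw [this, lp.coeFn_smul]
  simp only [Pi.smul_apply, ContinuousLinearMap.add_apply]
  rw [lp.coeFn_add, lp.coeFn_add, lp.coeFn_add, lp.coeFn_add, lp.coeFn_add]
  simp only [Pi.add_apply]
  rw [shiftCLM_apply, shiftCLM_apply, shiftCLM_apply, shiftCLM_apply, shiftCLM_apply,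
    shiftCLM_apply, e1, e2, e3, e4, e5, e6]
  unfold lapT
  rw [smul_eq_mul]
  ring

/-! ### Rank-one and finitely supported multiplication operators are compact -/

def evalCLM (n : ℤ × ℤ) : H2 →L[ℂ] ℂ :=
  LinearMap.mkContinuous
    { toFun := fun f => f n
      map_add' := fun f g => by
        change (f + g : H2) n = f n + g n
        rw [lp.coeFn_add]; rfl
      map_smul' := fun c f => by
        change (c • f : H2) n = c • (f n)
        rw [lp.coeFn_smul]; rfl }
    1 (fun f => by
      simpa using lp.norm_apply_le_norm (p := 2) (by norm_num) f n)

lemma isCompactOperator_smulRight (L : H2 →L[ℂ] ℂ) (v : H2) :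
    IsCompactOperator ⇑(L.smulRight v) := by
  refine ⟨(fun c : ℂ => c • v) '' Metric.closedBall 0 ‖L‖, ?_, ?_⟩
  · exact (isCompact_closedBall 0 ‖L‖).image (by fun_prop)
  · have h1 : Metric.closedBall (0:H2) 1 ∈ (𝓝 (0:H2)) :=
      Metric.closedBall_mem_nhds _ one_pos
    refine Filter.mem_of_superset h1 fun f hf => ?_
    refine ⟨L f, ?_, by simp⟩
    rw [Metric.mem_closedBall, dist_zero_right]
    calc ‖L f‖ ≤ ‖L‖ * ‖f‖ := L.le_opNorm f
      _ ≤ ‖L‖ * 1 := by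
          have : ‖f‖ ≤ 1 := by simpa [dist_zero_right] using hf
          exact mul_le_mul_of_nonneg_left this (norm_nonneg L)
      _ = ‖L‖ := mul_one _

def rank1 (n : ℤ × ℤ) : H2 →L[ℂ] H2 := (evalCLM n).smulRight (lp.single 2 n 1)

lemma isCompactOperator_finsum {ι : Type*} {F : ι → H2 →L[ℂ] H2}
    (h : ∀ i, IsCompactOperator ⇑(F i)) (S : Finset ι) :
    IsCompactOperator ⇑(∑ i ∈ S, F i) := by
  classical
  induction S using Finset.induction_on with
  | empty => simpa using (isCompactOperator_zero (M₁ := H2) (M₂ := H2))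
  | insert _ _ hni ih =>
    rw [Finset.sum_insert hni, ContinuousLinearMap.coe_add']
    exact (h _).add ih

lemma mulCLM_finset_eq (w : ℤ × ℤ → ℂ) (C : ℝ) (hw : ∀ n, ‖w n‖ ≤ C)
    (S : Finset (ℤ × ℤ)) (hsupp : ∀ n ∉ S, w n = 0) :
    ⇑(mulCLM w C hw) = ⇑(∑ n ∈ S, w n • rank1 n) := by
  classical
  funext f
  apply lp.ext; funext k
  have hL : (mulCLM w C hw f) k = w k * f k := rfl
  rw [hL]
  rw [ContinuousLinearMap.sum_apply, lp.coeFn_sum, Finset.sum_apply]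
  have hterm : ∀ n ∈ S, ((w n • rank1 n) f) k = if n = k then w k * f k else 0 := by
    intro n _
    have : ((w n • rank1 n) f) = w n • (f n • (lp.single 2 n 1 : H2)) := rfl
    rw [this, lp.coeFn_smul, Pi.smul_apply, lp.coeFn_smul, Pi.smul_apply]
    by_cases h : n = k
    · subst h
      rw [lp.single_apply_self, if_pos rfl]
      simp [mul_comm]
    · rw [lp.single_apply_ne 2 n _ (fun hk => h hk.symm), if_neg h]
      simp
  rw [Finset.sum_congr rfl hterm, Finset.sum_ite_eq' S k (fun _ => w k * f k)]
  by_cases hk : k ∈ S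
  · rw [if_pos hk]
  · rw [if_neg hk, hsupp k hk, zero_mul]

lemma isCompactOperator_mulCLM_of_finsupp (w : ℤ × ℤ → ℂ) (C : ℝ)
    (hw : ∀ n, ‖w n‖ ≤ C) (S : Finset (ℤ × ℤ)) (hsupp : ∀ n ∉ S, w n = 0) :
    IsCompactOperator ⇑(mulCLM w C hw) := by
  rw [mulCLM_finset_eq w C hw S hsupp]
  refine isCompactOperator_finsum (fun n => ?_) S
  rw [ContinuousLinearMap.coe_smul']
  exact (isCompactOperator_smulRight (evalCLM n) (lp.single 2 n 1)).smul (w n)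


lemma isCompactOperator_mulCLM_of_tendsto (w : ℤ × ℤ → ℂ) (C : ℝ)
    (hw : ∀ n, ‖w n‖ ≤ C) (htend : Tendsto w cofinite (𝓝 0)) :
    IsCompactOperator ⇑(mulCLM w C hw) := by
  classical
  set K := mulCLM w C hw with hK
  have hC : 0 ≤ C := le_trans (norm_nonneg _) (hw 0)
  have hwS : ∀ S : Finset (ℤ × ℤ), ∀ n, ‖(fun k => if k ∈ S then w k else 0) n‖ ≤ C := by
    intro S n
    by_cases h : n ∈ S <;> simp only [h, if_pos, if_neg, not_false_iff, norm_zero] <;> first | exact hw n | exact hC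
  set KS : Finset (ℤ × ℤ) → (H2 →L[ℂ] H2) :=
    fun S => mulCLM (fun k => if k ∈ S then w k else 0) C (hwS S) with hKS
  have hcomp : ∀ S, IsCompactOperator ⇑(KS S) := fun S =>
    isCompactOperator_mulCLM_of_finsupp _ C (hwS S) S (fun n hn => by simp [hn])
  have htendK : Tendsto KS atTop (𝓝 K) := by
    rw [Metric.tendsto_nhds]
    intro δ hδ
    have hev : ∀ᶠ n in cofinite, ‖w n‖ < δ/2 := by
      have := htend.eventually (Metric.ball_mem_nhds (0:ℂ) (by linarith : (0:ℝ) < δ/2))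
      simpa [dist_zero_right] using this
    rw [Filter.eventually_cofinite] at hev
    filter_upwards [Filter.eventually_ge_atTop hev.toFinset] with S hS
    rw [dist_eq_norm]
    have hb : ‖KS S - K‖ ≤ δ/2 := by
      refine ContinuousLinearMap.opNorm_le_bound _ (by linarith) fun f => ?_
      refine lp_norm_le_of_pointwise (by linarith) fun n => ?_
      have heq : ((KS S - K) f) n = (if n ∈ S then w n else 0) * f n - w n * f n := by
        rw [ContinuousLinearMap.sub_apply, lp.coeFn_sub, Pi.sub_apply]; rfl
      rw [heq]
      by_cases h : n ∈ S
      · rw [if_pos h, sub_self, norm_zero]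
        positivity
      · have hn0 : n ∉ hev.toFinset := fun hmem => h (hS hmem)
        have hlt : ‖w n‖ < δ/2 := by
          by_contra hcon
          exact hn0 (by simpa [Set.Finite.mem_toFinset] using le_of_not_gt hcon)
        rw [if_neg h, zero_mul, zero_sub, norm_neg, norm_mul]
        exact mul_le_mul_of_nonneg_right (le_of_lt hlt) (norm_nonneg _)
    linarith
  exact isCompactOperator_of_tendsto htendK (Filter.Eventually.of_forall hcomp)

end LapAux


set_option maxHeartbeats 1000000 in
/-- under `(H₀)`, the difference `Δ_T - Δ̃` is a compact operator on `ℓ²(ℤ²,ℂ)`. -/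
theorem lapT_sub_lapPert_compact (η : ℤ × ℤ → ℝ)
    (h0inf : ∃ c : ℝ, -1 < c ∧ ∀ n : ℤ × ℤ, c ≤ η n)
    (h0lim : Filter.Tendsto η Filter.cofinite (nhds 0))
    (D : H2 →L[ℂ] H2)
    (hD : ∀ (f : H2) (n : ℤ × ℤ),
      D f n = lapT (⇑f) n - lapPert (fun k => 1 + η k) (⇑f) n) :
    IsCompactOperator (⇑D) := by
  classical
  obtain ⟨c, hc1, hc⟩ := h0inf
  have hcpos : 0 < 1 + c := by linarith
  have hmpos : ∀ n : ℤ × ℤ, 0 < 1 + η n := fun n => by have := hc n; linarith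
  have hapos : ∀ n : ℤ × ℤ, 0 < Real.sqrt (1 + η n) := fun n => Real.sqrt_pos.2 (hmpos n)
  have hane : ∀ n : ℤ × ℤ, ((Real.sqrt (1 + η n) : ℝ) : ℂ) ≠ 0 := fun n =>
    Complex.ofReal_ne_zero.2 (ne_of_gt (hapos n))
  have halow : ∀ n, Real.sqrt (1 + c) ≤ Real.sqrt (1 + η n) := fun n =>
    Real.sqrt_le_sqrt (by have := hc n; linarith)
  have hsqpos : 0 < Real.sqrt (1 + c) := Real.sqrt_pos.2 hcpos
  have hCwpos : 0 < (Real.sqrt (1 + c))⁻¹ := inv_pos.2 hsqpos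
  have hwle : ∀ n, (Real.sqrt (1 + η n))⁻¹ ≤ (Real.sqrt (1 + c))⁻¹ := fun n => by
    gcongr
    exact hc n
  have hwbound : ∀ n, ‖((((Real.sqrt (1 + η n))⁻¹ : ℝ)) : ℂ)‖ ≤ (Real.sqrt (1 + c))⁻¹ :=
    fun n => by
      rw [Complex.norm_real, Real.norm_eq_abs, abs_of_pos (inv_pos.2 (hapos n))]
      exact hwle n
  have hεbound : ∀ n, ‖(((1 - (Real.sqrt (1 + η n))⁻¹ : ℝ)) : ℂ)‖
      ≤ 1 + (Real.sqrt (1 + c))⁻¹ := fun n => by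
    rw [Complex.norm_real, Real.norm_eq_abs]
    have h1 : 0 < (Real.sqrt (1 + η n))⁻¹ := inv_pos.2 (hapos n)
    have h2 := hwle n
    rw [abs_le]
    constructor <;> [linarith; linarith]
  set W := LapAux.mulCLM (fun n => ((((Real.sqrt (1 + η n))⁻¹ : ℝ)) : ℂ))
    ((Real.sqrt (1 + c))⁻¹) hwbound with hW
  set K := LapAux.mulCLM (fun n => (((1 - (Real.sqrt (1 + η n))⁻¹ : ℝ)) : ℂ))
    (1 + (Real.sqrt (1 + c))⁻¹) hεbound with hKdef
  have hKcomp : IsCompactOperator ⇑K := by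
    rw [hKdef]
    apply LapAux.isCompactOperator_mulCLM_of_tendsto
    have hg : ContinuousAt (fun t : ℝ => 1 - (Real.sqrt (1 + t))⁻¹) 0 := by
      apply ContinuousAt.sub continuousAt_const
      apply ContinuousAt.inv₀
      · exact (Real.continuous_sqrt.continuousAt).comp (by fun_prop)
      · simp
    have h1 : Filter.Tendsto (fun n : ℤ × ℤ => 1 - (Real.sqrt (1 + η n))⁻¹)
        Filter.cofinite (nhds 0) := by
      have := hg.tendsto.comp h0lim
      simpa [Function.comp_def] using this
    have h2 := (Complex.continuous_ofReal.tendsto 0).comp h1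
    rw [Function.comp_def] at h2
    simpa using h2
  have hDT : ⇑D = ⇑(K ∘L (LapAux.lapTCLM ∘L W) + LapAux.lapTCLM ∘L K) := by
    funext f
    apply lp.ext; funext n
    rw [hD f n]
    have hR : ((K ∘L (LapAux.lapTCLM ∘L W) + LapAux.lapTCLM ∘L K) f : H2)
        = K (LapAux.lapTCLM (W f)) + LapAux.lapTCLM (K f) := rfl
    rw [hR, lp.coeFn_add, Pi.add_apply]
    rw [hKdef, LapAux.mulCLM_apply, LapAux.lapTCLM_apply, LapAux.lapTCLM_apply]
    have hWf : ∀ k, (W f) k = ((((Real.sqrt (1 + η k))⁻¹ : ℝ)) : ℂ) * f k := fun k => rfl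
    have hKf : ∀ k, (K f) k = (((1 - (Real.sqrt (1 + η k))⁻¹ : ℝ)) : ℂ) * f k := fun k => rfl
    have key : ∀ l : ℤ × ℤ, (f l : ℂ) /
        ((Real.sqrt (1 + η n) * Real.sqrt (1 + η l) : ℝ) : ℂ)
        = ((((Real.sqrt (1 + η n))⁻¹ : ℝ)) : ℂ)
          * (((((Real.sqrt (1 + η l))⁻¹ : ℝ)) : ℂ) * f l) := by
      intro l
      have h1 := hane n
      have h2 := hane l
      push_cast
      field_simp
    simp only [lapT, lapPert, hWf, hKf, LapAux.mulCLM_apply]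
    rw [key (n.1 + 1, n.2), key (n.1 - 1, n.2), key (n.1, n.2 + 1), key (n.1, n.2 - 1),
      key (n.1 + 1, n.2 - 1), key (n.1 - 1, n.2 + 1)]
    push_cast
    ring
  rw [hDT, ContinuousLinearMap.coe_add']
  refine IsCompactOperator.add ?_ ?_
  · rw [ContinuousLinearMap.coe_comp']
    exact hKcomp.comp_clm _
  · rw [ContinuousLinearMap.coe_comp']
    exact hKcomp.continuous_comp LapAux.lapTCLM.continuous
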